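/- arXiv:2108.06941 — 3 statements merged into one kernel-verified Lean document; each statement's English description precedes it below -/
import Mathlib

section
/- Let d ≥ 1 and let τ_UV be the upper Vietoris topology on the collection of all closed subsets of ℝ^d, i.e. the topology generated by the sets {F ⊆ ℝ^d : F closed, F ⊆ U} for U ranging over the open subsets of ℝ^d. Then no countable family of subsets of this hyperspace is a pseudobase for τ_UV. In particular, the hyperspace of closed subsets of ℝ^d with the upper Vietoris topology is not second countable. -/
open Topology

/-- The type of closed subsets of `ℝ^d`. -/
def ClosedSubsets (d : ℕ) : Type :=
  {F : Set (EuclideanSpace ℝ (Fin d)) // IsClosed F}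

/-- The upper Vietoris topology on the closed subsets of `ℝ^d`, generated by the sets
`{F closed : F ⊆ U}` for `U` open. -/
def upperVietoris (d : ℕ) : TopologicalSpace (ClosedSubsets d) :=
  TopologicalSpace.generateFrom
    {S | ∃ U : Set (EuclideanSpace ℝ (Fin d)), IsOpen U ∧ S = {F : ClosedSubsets d | F.1 ⊆ U}}

/-- A family `B` of subsets of a topological space `(X, τ)` is a pseudobase if for every
open `U`, every `x ∈ U` and every sequence `y` converging to `x`, there are `P ∈ B` and `n₀`
with `{x} ∪ {y n : n ≥ n₀} ⊆ P ⊆ U`. -/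
def IsPseudobase {X : Type*} (τ : TopologicalSpace X) (B : Set (Set X)) : Prop :=
  ∀ U : Set X, IsOpen[τ] U → ∀ x ∈ U, ∀ y : ℕ → X,
    Filter.Tendsto y Filter.atTop (@nhds X τ x) →
    ∃ P ∈ B, ∃ n₀ : ℕ, ({x} ∪ {z | ∃ n ≥ n₀, z = y n}) ⊆ P ∧ P ⊆ U

lemma no_countable_pseudobase (d : ℕ) (hd : 1 ≤ d) (B : Set (Set (ClosedSubsets d)))
    (hBc : B.Countable) (hB : IsPseudobase (upperVietoris d) B) : False := by
  classical
  letI τ : TopologicalSpace (ClosedSubsets d) := upperVietoris d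
  set i0 : Fin d := ⟨0, hd⟩ with hi0
  set e : ℕ → EuclideanSpace ℝ (Fin d) := fun m => EuclideanSpace.single i0 (m : ℝ) with he
  have dist_e : ∀ m m' : ℕ, dist (e m) (e m') = |(m : ℝ) - (m' : ℝ)| := by
    intro m m'
    simp [he, EuclideanSpace.dist_single_same, Real.dist_eq]
  have dist_ge : ∀ m m' : ℕ, m ≠ m' → (1 : ℝ) ≤ dist (e m) (e m') := by
    intro m m' hne
    rw [dist_e]
    have : (1 : ℤ) ≤ |(m : ℤ) - (m' : ℤ)| := by
      apply Int.one_le_abs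
      omega
    calc (1:ℝ) = ((1:ℤ):ℝ) := by norm_num
    _ ≤ ((|(m : ℤ) - (m' : ℤ)| : ℤ) : ℝ) := by exact_mod_cast this
    _ = |(m : ℝ) - (m' : ℝ)| := by push_cast; ring_nf
  have e_inj : Function.Injective e := by
    intro m m' h
    by_contra hne
    have := dist_ge m m' hne
    rw [h, dist_self] at this
    linarith
  have hZclosed : ∀ A : Set ℕ, IsClosed (e '' A) := by
    intro A
    apply Metric.isClosed_of_pairwise_le_dist (ε := 1) one_pos
    rintro _ ⟨m, _, rfl⟩ _ ⟨m', _, rfl⟩ hne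
    exact dist_ge m m' (fun h => hne (by rw [h]))
  set Z : Set ℕ → ClosedSubsets d := fun A => ⟨e '' A, hZclosed A⟩ with hZ
  set V : Set ℕ → Set (EuclideanSpace ℝ (Fin d)) :=
    fun A => ⋃ m ∈ A, Metric.ball (e m) (1 / 2) with hV
  have hVopen : ∀ A, IsOpen (V A) := fun A =>
    isOpen_biUnion fun _ _ => Metric.isOpen_ball
  -- key: points of `e '' A` lie in `V A'` only if `A ⊆ A'`
  have hsub : ∀ A A' : Set ℕ, (Z A).1 ⊆ V A' → A ⊆ A' := by
    intro A A' h m hm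
    have := h ⟨m, hm, rfl⟩
    simp only [hV, Set.mem_iUnion, Metric.mem_ball] at this
    obtain ⟨m', hm', hlt⟩ := this
    have hmm : m = m' := by
      by_contra hne
      have := dist_ge m m' hne
      linarith
    rwa [hmm]
  have key : ∀ A : Set ℕ, ∃ P ∈ B, Z A ∈ P ∧ P ⊆ {F : ClosedSubsets d | F.1 ⊆ V A} := by
    intro A
    have hUopen : IsOpen[upperVietoris d] {F : ClosedSubsets d | F.1 ⊆ V A} := by
      apply TopologicalSpace.isOpen_generateFrom_of_mem
      exact ⟨V A, hVopen A, rfl⟩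
    have hxU : Z A ∈ {F : ClosedSubsets d | F.1 ⊆ V A} := by
      rintro _ ⟨m, hm, rfl⟩
      simp only [hV, Set.mem_iUnion, Metric.mem_ball]
      exact ⟨m, hm, by norm_num [dist_self]⟩
    obtain ⟨P, hPB, n₀, hPsub, hPU⟩ := hB _ hUopen (Z A) hxU (fun _ => Z A)
      tendsto_const_nhds
    exact ⟨P, hPB, hPsub (Or.inl rfl), hPU⟩
  choose g hgB hgmem hgsub using key
  have g_inj : Function.Injective g := by
    intro A A' hgg
    have h1 : A ⊆ A' := hsub A A' (hgsub A' (hgg ▸ hgmem A))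
    have h2 : A' ⊆ A := hsub A' A (hgsub A (hgg ▸ hgmem A'))
    exact le_antisymm h1 h2
  haveI : Countable ↥B := hBc.to_subtype
  obtain ⟨ι, hι⟩ := exists_injective_nat ↥B
  exact Function.cantor_injective (fun A => ι ⟨g A, hgB A⟩)
    (fun A A' h => g_inj (Subtype.mk_eq_mk.mp (hι h)))

/-- No countable family of subsets of the hyperspace of closed subsets of `ℝ^d` with the upper
Vietoris topology is a pseudobase; in particular this hyperspace is not second countable. -/
theorem stmt0 (d : ℕ) (hd : 1 ≤ d) :
    (∀ B : Set (Set (ClosedSubsets d)), B.Countable → ¬ IsPseudobase (upperVietoris d) B) ∧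
    ¬ @SecondCountableTopology (ClosedSubsets d) (upperVietoris d) := by
  constructor
  · exact fun B hBc hB => no_countable_pseudobase d hd B hBc hB
  · intro hsc
    letI τ := upperVietoris d
    haveI : SecondCountableTopology (ClosedSubsets d) := hsc
    obtain ⟨b, hbc, -, hb⟩ := TopologicalSpace.exists_countable_basis (ClosedSubsets d)
    apply no_countable_pseudobase d hd b hbc
    intro U hU x hx y hy
    obtain ⟨P, hPb, hxP, hPU⟩ := hb.exists_subset_of_mem_open hx hU
    have hPopen : IsOpen P := hb.isOpen hPb
    have hev : ∀ᶠ n in Filter.atTop, y n ∈ P := hy (hPopen.mem_nhds hxP)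
    obtain ⟨n₀, hn₀⟩ := Filter.eventually_atTop.mp hev
    refine ⟨P, hPb, n₀, ?_, hPU⟩
    rintro z (rfl | ⟨n, hn, rfl⟩)
    · exact hxP
    · exact hn₀ n hn
end

section
/- Fix a smooth nonnegative φ : ℝ → ℝ with support contained in [0,1] and ∫φ = 1; for ζ > 0 set φ^ζ(x) := ζ⁻¹φ(x/ζ), Φ^ζ(x) := ∑_{k∈ℤ} φ^ζ(x−k), Φ^ζ_p(x) := Φ^ζ(px). For an integer M > 2 let P_M be the set of primes p with M/2 < p ≤ M (nonempty by Bertrand's postulate) and F^ζ_M := |P_M|⁻¹ ∑_{p∈P_M} Φ^ζ_p. Then for every ζ > 0 and every integer M > 2: (1) the 0-th Fourier coefficient of F^ζ_M equals 1; and (2) for every k ∈ ℤ with 0 < |k| ≤ M/2, the k-th Fourier coefficient of F^ζ_M equals 0. -/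
open MeasureTheory

/-- The `k`-th Fourier coefficient of a 1-periodic function `g : ℝ → ℂ`,
`ĝ(k) := ∫₀¹ g(x) e^{-2πikx} dx`. -/
noncomputable def fCoeff (g : ℝ → ℂ) (k : ℤ) : ℂ :=
  ∫ x in (0 : ℝ)..1, g x * Complex.exp (-(2 * (Real.pi : ℂ) * Complex.I * (k : ℂ) * (x : ℂ)))

/-- The rescaling `φ^ζ(x) := ζ⁻¹ φ(x/ζ)`. -/
noncomputable def scaled (φ : ℝ → ℝ) (ζ : ℝ) (x : ℝ) : ℝ := ζ⁻¹ * φ (x / ζ)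

/-- The periodization `∑_{k ∈ ℤ} f(x - k)` of `f : ℝ → ℝ`. -/
noncomputable def periodize (f : ℝ → ℝ) (x : ℝ) : ℝ := ∑' k : ℤ, f (x - (k : ℝ))

/-- `Φ^ζ_p(x) := Φ^ζ(px)`, where `Φ^ζ` is the periodization of `φ^ζ`. -/
noncomputable def Phip (φ : ℝ → ℝ) (ζ : ℝ) (p : ℕ) (x : ℝ) : ℝ :=
  periodize (scaled φ ζ) ((p : ℝ) * x)

/-- The set `P_M` of primes `p` with `M/2 < p ≤ M`. -/
def PM (M : ℕ) : Finset ℕ :=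
  (Finset.range (M + 1)).filter (fun p => Nat.Prime p ∧ M < 2 * p)

/-- `F^ζ_M := |P_M|⁻¹ ∑_{p ∈ P_M} Φ^ζ_p`. -/
noncomputable def FzM (φ : ℝ → ℝ) (ζ : ℝ) (M : ℕ) (x : ℝ) : ℝ :=
  ((PM M).card : ℝ)⁻¹ * ∑ p ∈ PM M, Phip φ ζ p x

namespace Stmt6Aux

open Complex TopologicalSpace Set Function

/-- A function of the form `q ↦ g (α q + β)` with `g` compactly supported and `α ≠ 0`
is summable over `ℤ` (finite support). -/
lemma summable_affine {g : ℝ → ℂ} (hg : HasCompactSupport g) {α : ℝ} (hα : α ≠ 0) (β : ℝ) :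
    Summable fun q : ℤ => g (α * q + β) := by
  obtain ⟨R, hR⟩ := hg.isBounded.subset_closedBall 0
  apply summable_of_finite_support
  have : Function.support (fun q : ℤ => g (α * q + β)) ⊆
      Set.Icc (⌈-((R + |β|) / |α|)⌉) (⌊(R + |β|) / |α|⌋) := by
    intro q hq
    have h1 : α * q + β ∈ tsupport g := subset_closure hq
    have h2 : |α * q + β| ≤ R := by
      have := hR h1
      simpa [Real.closedBall_eq_Icc, abs_le] using
        (mem_closedBall_zero_iff.mp this)
    have h3 : |α| * |(q : ℝ)| ≤ R + |β| := by
      have := abs_sub_abs_le_abs_sub (α * q) (-β)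
      rw [abs_mul] at this
      simp only [abs_neg, sub_neg_eq_add] at this
      nlinarith [abs_nonneg β, abs_nonneg (α * q + β)]
    have h4 : |(q : ℝ)| ≤ (R + |β|) / |α| := by
      rw [le_div_iff₀ (abs_pos.mpr hα)]
      linarith [h3]
    constructor
    · rw [Int.ceil_le]
      push_cast
      rw [abs_le] at h4; linarith [h4.1]
    · rw [Int.le_floor]
      rw [abs_le] at h4; exact_mod_cast h4.2
  exact (Set.finite_Icc _ _).subset this

/-- Restriction norms of integer translates of a compactly supported continuous map
are summable. -/
lemma summable_restrict {h : C(ℝ, ℂ)} (hh : HasCompactSupport (h : ℝ → ℂ))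
    (K : Compacts ℝ) :
    Summable fun n : ℤ => ‖(h.comp (ContinuousMap.addRight (n : ℝ))).restrict K‖ := by
  obtain ⟨R, hR⟩ := hh.isBounded.subset_closedBall 0
  obtain ⟨S, hS⟩ := K.isCompact.isBounded.subset_closedBall 0
  apply summable_of_ne_finset_zero (s := Finset.Icc (-(⌈R + S⌉ + 1)) (⌈R + S⌉ + 1))
  intro n hn
  have hn' : (⌈R + S⌉ + 1 : ℤ) < |n| := by
    simp only [Finset.mem_Icc, not_and_or, not_le] at hn
    rw [lt_abs]
    omega
  have hzero : (h.comp (ContinuousMap.addRight (n : ℝ))).restrict K = 0 := by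
    ext ⟨x, hx⟩
    simp only [ContinuousMap.restrict_apply, ContinuousMap.comp_apply,
      ContinuousMap.coe_addRight, ContinuousMap.zero_apply]
    apply image_eq_zero_of_notMem_tsupport
    intro hmem
    have h1 : ‖x + (n : ℝ)‖ ≤ R := mem_closedBall_zero_iff.mp (hR hmem)
    have h2 : ‖x‖ ≤ S := mem_closedBall_zero_iff.mp (hS hx)
    have h3 : |(n : ℝ)| ≤ R + S := by
      have : |(n : ℝ)| ≤ |x + n| + |x| := by
        calc |(n : ℝ)| = |(x + n) - x| := by ring_nf
        _ ≤ |x + n| + |x| := abs_sub _ _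
      simp only [Real.norm_eq_abs] at h1 h2
      linarith
    have h4 : (R + S : ℝ) < |(n : ℝ)| := by
      have hle : (R + S : ℝ) ≤ ⌈R + S⌉ := Int.le_ceil _
      have h5 : ((⌈R + S⌉ + 1 : ℤ) : ℝ) < ((|n| : ℤ) : ℝ) := by exact_mod_cast hn'
      rw [Int.cast_abs] at h5
      push_cast at h5
      linarith
    linarith
  rw [hzero, norm_zero]

end Stmt6Aux

namespace Stmt6Aux
open Complex TopologicalSpace Set Function

lemma tsum_neg_reindex (h : ℝ → ℂ) (x : ℝ) :
    (∑' n : ℤ, h (x + (n : ℝ))) = ∑' m : ℤ, h (x - (m : ℝ)) := by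
  rw [← (Equiv.neg ℤ).tsum_eq (fun m : ℤ => h (x - (m : ℝ)))]
  congr 1
  funext n
  simp [sub_neg_eq_add]

/-- The periodization `x ↦ ∑' m, h (x - m)` of a compactly supported continuous map
is continuous. -/
lemma continuous_periodize (h : C(ℝ, ℂ)) (hh : HasCompactSupport (h : ℝ → ℂ)) :
    Continuous fun x : ℝ => ∑' m : ℤ, h (x - (m : ℝ)) := by
  have hsum : Summable fun n : ℤ => h.comp (ContinuousMap.addRight (n : ℝ)) :=
    ContinuousMap.summable_of_locally_summable_norm (fun K => summable_restrict hh K)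
  have := (∑' n : ℤ, h.comp (ContinuousMap.addRight (n : ℝ))).continuous
  apply this.congr
  intro x
  rw [← tsum_neg_reindex]
  rw [← ContinuousMap.tsum_apply hsum]
  rfl

/-- Fourier coefficient of the periodization equals the Fourier integral. -/
lemma fCoeff_periodize (h : C(ℝ, ℂ)) (hh : HasCompactSupport (h : ℝ → ℂ)) (k : ℤ) :
    fCoeff (fun x => ∑' m : ℤ, h (x - (m : ℝ))) k
      = ∫ x : ℝ, h x * Complex.exp (-(2 * (Real.pi : ℂ) * Complex.I * (k : ℂ) * (x : ℂ))) := by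
  have hsum' : ∀ K : Compacts ℝ,
      Summable fun n : ℤ => ‖(h.comp (ContinuousMap.addRight (n : ℝ))).restrict K‖ :=
    fun K => summable_restrict hh K
  have hsum : Summable fun n : ℤ => h.comp (ContinuousMap.addRight (n : ℝ)) :=
    ContinuousMap.summable_of_locally_summable_norm hsum'
  have key := Real.fourierCoeff_tsum_comp_add hsum' k
  rw [fourierCoeff_eq_intervalIntegral _ k 0] at key
  rw [Real.fourier_real_eq_integral_exp_smul] at key
  simp only [zero_add, div_one, one_smul] at key
  calc fCoeff (fun x => ∑' m : ℤ, h (x - (m : ℝ))) k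
      = ∫ x in (0:ℝ)..1,
          fourier (-k) (x : AddCircle (1:ℝ)) •
          (Function.Periodic.lift (h.periodic_tsum_comp_add_zsmul 1)) (x : AddCircle (1:ℝ)) := by
        unfold fCoeff
        apply intervalIntegral.integral_congr
        intro x _
        simp only [Function.Periodic.lift_coe, fourier_coe_apply]
        have h1 : (⇑(∑' n : ℤ, h.comp (ContinuousMap.addRight ((n : ℤ) • (1:ℝ))))) x
            = ∑' m : ℤ, h (x - (m : ℝ)) := by
          rw [← tsum_neg_reindex]
          have : ∀ n : ℤ, ContinuousMap.addRight ((n : ℤ) • (1:ℝ)) =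
              ContinuousMap.addRight ((n : ℝ)) := by intro n; congr 1; simp
          simp_rw [this]
          rw [← ContinuousMap.tsum_apply hsum]
          rfl
        rw [h1, smul_eq_mul, mul_comm]
        congr 2
        push_cast
        ring
    _ = ∫ v : ℝ, Complex.exp (↑(-2 * Real.pi * v * (k:ℝ)) * Complex.I) • h v := key
    _ = ∫ x : ℝ, h x * Complex.exp (-(2 * (Real.pi : ℂ) * Complex.I * (k : ℂ) * (x : ℂ))) := by
        congr 1
        funext v
        rw [smul_eq_mul, mul_comm]
        congr 1
        push_cast
        ring

end Stmt6Aux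

namespace Stmt6Aux
open Complex TopologicalSpace Set Function

variable {φ : ℝ → ℝ} {ζ : ℝ}

lemma continuous_scaled (hφ : Continuous φ) (hz : 0 < ζ) : Continuous (scaled φ ζ) := by
  unfold scaled
  fun_prop

lemma support_scaled (hsupp : Function.support φ ⊆ Set.Icc 0 1) (hz : 0 < ζ) :
    Function.support (scaled φ ζ) ⊆ Set.Icc 0 ζ := by
  intro x hx
  have : φ (x / ζ) ≠ 0 := by
    intro h0
    apply hx
    simp [scaled, h0]
  have hmem := hsupp this
  obtain ⟨h1, h2⟩ := hmem
  constructor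
  · have h3 : 0 ≤ (x / ζ) * ζ := mul_nonneg h1 hz.le
    rwa [div_mul_cancel₀ _ hz.ne'] at h3
  · calc x = (x / ζ) * ζ := by field_simp
    _ ≤ 1 * ζ := by nlinarith
    _ = ζ := one_mul ζ

lemma hasCompactSupport_scaled (hsupp : Function.support φ ⊆ Set.Icc 0 1) (hz : 0 < ζ) :
    HasCompactSupport (scaled φ ζ) := by
  apply HasCompactSupport.intro (isCompact_Icc (a := (0:ℝ)) (b := ζ))
  intro x hx
  by_contra h0
  exact hx (support_scaled hsupp hz h0)

lemma integral_scaled (hz : 0 < ζ) (hint : ∫ x : ℝ, φ x = 1) :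
    ∫ x : ℝ, scaled φ ζ x = 1 := by
  unfold scaled
  rw [MeasureTheory.integral_const_mul, MeasureTheory.Measure.integral_comp_div (fun x => φ x) ζ,
    hint, smul_eq_mul, mul_one, abs_of_pos hz, inv_mul_cancel₀ hz.ne']

end Stmt6Aux

namespace Stmt6Aux
open Complex TopologicalSpace Set Function

set_option maxHeartbeats 1000000 in
lemma decomp {g : ℝ → ℝ} (hgc : HasCompactSupport g) (p : ℕ) (hp : 0 < p) (x : ℝ) :
    ((periodize g ((p : ℝ) * x) : ℝ) : ℂ)
      = ∑ r ∈ Finset.range p, ∑' q : ℤ, ((g ((p : ℝ) * (x - (q : ℝ)) - (r : ℝ)) : ℝ) : ℂ) := by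
  have hp0 : (p : ℝ) ≠ 0 := Nat.cast_ne_zero.mpr hp.ne'
  set gc : ℝ → ℂ := fun y => ((g y : ℝ) : ℂ) with hgcdef
  have hgc' : HasCompactSupport gc := hgc.comp_left (g := fun t : ℝ => (t : ℂ)) rfl
  set a : ℤ → ℂ := fun m => gc ((p : ℝ) * x - (m : ℝ)) with hadef
  have hsa : Summable a := by
    have := summable_affine hgc' (α := (-1 : ℝ)) (by norm_num) ((p : ℝ) * x)
    apply this.congr
    intro m
    simp [a, sub_eq_add_neg, add_comm]
  haveI : NeZero p := ⟨hp.ne'⟩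
  set e : Fin p × ℤ ≃ ℤ := (Equiv.prodComm (Fin p) ℤ).trans (Int.divModEquiv p).symm with hedef
  have he : ∀ rq : Fin p × ℤ, (e rq : ℤ) = rq.2 * p + rq.1 := by
    intro rq
    simp [e, Int.divModEquiv]
  have hprod : Summable fun rq : Fin p × ℤ => a (e rq) := e.summable_iff.mpr hsa
  have hsec : ∀ r : Fin p, Summable fun q : ℤ => a (q * p + r) := by
    intro r
    have := summable_affine hgc' (α := (-(p : ℝ))) (by simpa using hp0) ((p : ℝ) * x - r)
    apply this.congr
    intro q
    simp only [a]
    congr 1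
    push_cast
    ring
  calc ((periodize g ((p : ℝ) * x) : ℝ) : ℂ) = ∑' m : ℤ, a m := by
        unfold periodize
        rw [Complex.ofReal_tsum]
    _ = ∑' rq : Fin p × ℤ, a (e rq) := (e.tsum_eq a).symm
    _ = ∑' r : Fin p, ∑' q : ℤ, a (q * p + r) := by
        rw [Summable.tsum_prod' hprod (fun r => by simpa [he] using hsec r)]
        exact tsum_congr fun r => tsum_congr fun q => by rw [he]
    _ = ∑ r : Fin p, ∑' q : ℤ, a (q * p + r) := tsum_fintype _
    _ = ∑ r ∈ Finset.range p, ∑' q : ℤ, a (q * p + r) := by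
        rw [Finset.sum_range fun r => ∑' q : ℤ, a (q * p + ((r : ℤ)))]
    _ = _ := by
        apply Finset.sum_congr rfl
        intro r _
        congr 1
        funext q
        simp only [a, gc]
        congr 1
        push_cast
        ring

end Stmt6Aux

namespace Stmt6Aux
open Complex TopologicalSpace Set Function

/-- The building block `y ↦ g (p y - r)` as a continuous map, for `g` cont. + cpt. supp. -/
noncomputable def Hmap (g : ℝ → ℝ) (hg : Continuous g) (p : ℕ) (hp : 0 < p) (r : ℕ) :
    C(ℝ, ℂ) :=
  ⟨fun y => ((g ((p : ℝ) * y - (r : ℝ)) : ℝ) : ℂ), by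
    apply Complex.continuous_ofReal.comp
    exact hg.comp (by fun_prop)⟩

lemma Hmap_compactSupport {g : ℝ → ℝ} (hg : Continuous g) (hgc : HasCompactSupport g)
    (p : ℕ) (hp : 0 < p) (r : ℕ) :
    HasCompactSupport ((Hmap g hg p hp r : ℝ → ℂ)) := by
  have hp0 : (p : ℝ) ≠ 0 := Nat.cast_ne_zero.mpr hp.ne'
  have hgc' : HasCompactSupport fun y : ℝ => ((g y : ℝ) : ℂ) :=
    hgc.comp_left (g := fun t : ℝ => (t : ℂ)) rfl
  have he := hgc'.comp_homeomorph
    ((Homeomorph.mulLeft₀ (p : ℝ) hp0).trans (Homeomorph.addRight (-(r : ℝ))))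
  have : ((fun y : ℝ => ((g y : ℝ) : ℂ)) ∘
      ((Homeomorph.mulLeft₀ (p : ℝ) hp0).trans (Homeomorph.addRight (-(r : ℝ)))))
      = (Hmap g hg p hp r : ℝ → ℂ) := by
    funext y
    simp [Hmap, Function.comp, sub_eq_add_neg, Homeomorph.coe_mulLeft₀, Homeomorph.addRight]
  rwa [this] at he

lemma fCoeff_Phip {φ : ℝ → ℝ} {ζ : ℝ} (hφc : Continuous φ)
    (hsupp : Function.support φ ⊆ Set.Icc 0 1) (hz : 0 < ζ)
    (p : ℕ) (hp : 0 < p) (k : ℤ) :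
    fCoeff (fun x => ((Phip φ ζ p x : ℝ) : ℂ)) k
      = (p : ℂ)⁻¹
        * (∑ r ∈ Finset.range p,
            Complex.exp (-(2 * (Real.pi : ℂ) * Complex.I * (k : ℂ) / (p : ℂ))) ^ r)
        * ∫ y : ℝ, ((scaled φ ζ y : ℝ) : ℂ)
            * Complex.exp (-(2 * (Real.pi : ℂ) * Complex.I * (k : ℂ) * (y : ℂ) / (p : ℂ))) := by
  have hp0 : (p : ℝ) ≠ 0 := Nat.cast_ne_zero.mpr hp.ne'
  have hp0' : (p : ℂ) ≠ 0 := Nat.cast_ne_zero.mpr hp.ne'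
  set g : ℝ → ℝ := scaled φ ζ with hgdef
  have hg : Continuous g := continuous_scaled hφc hz
  have hgc : HasCompactSupport g := hasCompactSupport_scaled hsupp hz
  set ω : ℂ := Complex.exp (-(2 * (Real.pi : ℂ) * Complex.I * (k : ℂ) / (p : ℂ))) with hωdef
  set C : ℂ := ∫ y : ℝ, ((g y : ℝ) : ℂ)
      * Complex.exp (-(2 * (Real.pi : ℂ) * Complex.I * (k : ℂ) * (y : ℂ) / (p : ℂ))) with hCdef
  -- Step A : split the Fourier coefficient as a sum over residues
  have stepA : fCoeff (fun x => ((Phip φ ζ p x : ℝ) : ℂ)) k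
      = ∑ r ∈ Finset.range p,
          fCoeff (fun x => ∑' m : ℤ, (Hmap g hg p hp r) (x - (m : ℝ))) k := by
    unfold fCoeff
    rw [← intervalIntegral.integral_finset_sum]
    · apply intervalIntegral.integral_congr
      intro x _
      simp only [Phip]
      rw [decomp hgc p hp x, Finset.sum_mul]
      rfl
    · intro r _
      apply Continuous.intervalIntegrable
      exact (continuous_periodize _ (Hmap_compactSupport hg hgc p hp r)).mul (by fun_prop)
  rw [stepA]
  -- Step B/C : compute each term
  have stepB : ∀ r : ℕ,
      fCoeff (fun x => ∑' m : ℤ, (Hmap g hg p hp r) (x - (m : ℝ))) k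
        = (p : ℂ)⁻¹ * (C * ω ^ r) := by
    intro r
    rw [fCoeff_periodize _ (Hmap_compactSupport hg hgc p hp r) k]
    set G : ℝ → ℂ := fun y => ((g y : ℝ) : ℂ)
        * Complex.exp (-(2 * (Real.pi : ℂ) * Complex.I * (k : ℂ) * (((y : ℝ) : ℂ) + (r : ℂ)) / (p : ℂ))) with hGdef
    have h1 : ∀ x : ℝ, (Hmap g hg p hp r) x
        * Complex.exp (-(2 * (Real.pi : ℂ) * Complex.I * (k : ℂ) * (x : ℂ)))
        = G ((p : ℝ) * x - (r : ℝ)) := by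
      intro x
      simp only [G, Hmap, ContinuousMap.coe_mk]
      congr 2
      push_cast
      field_simp
      ring
    have h2 : (∫ x : ℝ, (Hmap g hg p hp r) x
        * Complex.exp (-(2 * (Real.pi : ℂ) * Complex.I * (k : ℂ) * (x : ℂ))))
        = ∫ x : ℝ, G ((p : ℝ) * x - (r : ℝ)) := by
      congr 1; funext x; exact h1 x
    rw [h2]
    have h3 : (∫ x : ℝ, G ((p : ℝ) * x - (r : ℝ)))
        = |((p : ℝ))⁻¹| • ∫ y : ℝ, G (y - (r : ℝ)) := by
      exact MeasureTheory.Measure.integral_comp_mul_left (fun y => G (y - (r : ℝ))) (p : ℝ)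
    rw [h3, MeasureTheory.integral_sub_right_eq_self G ((r : ℝ))]
    have h4 : (∫ y : ℝ, G y) = C * ω ^ r := by
      have h5 : ∀ y : ℝ, G y = (((g y : ℝ) : ℂ)
          * Complex.exp (-(2 * (Real.pi : ℂ) * Complex.I * (k : ℂ) * (y : ℂ) / (p : ℂ)))) * ω ^ r := by
        intro y
        simp only [G]
        have hexp : Complex.exp (-(2 * (Real.pi : ℂ) * Complex.I * (k : ℂ) * ((y : ℂ) + (r : ℂ)) / (p : ℂ)))
            = Complex.exp (-(2 * (Real.pi : ℂ) * Complex.I * (k : ℂ) * (y : ℂ) / (p : ℂ))) * ω ^ r := by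
          rw [hωdef, ← Complex.exp_nat_mul, ← Complex.exp_add]
          congr 1
          field_simp
          ring
        rw [hexp]
        ring
      simp_rw [h5]
      rw [MeasureTheory.integral_mul_const, hCdef]
    rw [h4]
    rw [abs_of_pos (by positivity : (0:ℝ) < ((p : ℝ))⁻¹), Complex.real_smul]
    push_cast
    ring
  calc (∑ r ∈ Finset.range p,
        fCoeff (fun x => ∑' m : ℤ, (Hmap g hg p hp r) (x - (m : ℝ))) k)
      = ∑ r ∈ Finset.range p, (p : ℂ)⁻¹ * (C * ω ^ r) :=
        Finset.sum_congr rfl fun r _ => stepB r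
    _ = (p : ℂ)⁻¹ * (∑ r ∈ Finset.range p, ω ^ r) * C := by
        rw [Finset.mul_sum, Finset.sum_mul]
        exact Finset.sum_congr rfl fun r _ => by ring

end Stmt6Aux

namespace Stmt6Aux
open Complex TopologicalSpace Set Function

lemma continuous_Phip {φ : ℝ → ℝ} {ζ : ℝ} (hφc : Continuous φ)
    (hsupp : Function.support φ ⊆ Set.Icc 0 1) (hz : 0 < ζ) (p : ℕ) (hp : 0 < p) :
    Continuous fun x : ℝ => ((Phip φ ζ p x : ℝ) : ℂ) := by
  have hdec : ∀ x : ℝ, ((Phip φ ζ p x : ℝ) : ℂ)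
      = ∑ r ∈ Finset.range p,
          ∑' m : ℤ, (Hmap (scaled φ ζ) (continuous_scaled hφc hz) p hp r) (x - (m : ℝ)) := by
    intro x
    exact decomp (hasCompactSupport_scaled hsupp hz) p hp x
  apply Continuous.congr _ (fun x => (hdec x).symm)
  exact continuous_finset_sum _ fun r _ =>
    continuous_periodize _
      (Hmap_compactSupport (continuous_scaled hφc hz) (hasCompactSupport_scaled hsupp hz) p hp r)

end Stmt6Aux

open Stmt6Aux in
/-- For every `ζ > 0` and integer `M > 2`: the 0-th Fourier coefficient of `F^ζ_M` equals 1,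
and the `k`-th Fourier coefficient of `F^ζ_M` vanishes for `0 < |k| ≤ M/2`. -/
theorem stmt6 (φ : ℝ → ℝ) (hφ : ContDiff ℝ (⊤ : ℕ∞) φ) (hpos : ∀ x, 0 ≤ φ x)
    (hsupp : Function.support φ ⊆ Set.Icc 0 1) (hint : ∫ x : ℝ, φ x = 1) :
    ∀ ζ : ℝ, 0 < ζ → ∀ M : ℕ, 2 < M →
      fCoeff (fun x => ((FzM φ ζ M x : ℝ) : ℂ)) 0 = 1 ∧
      ∀ k : ℤ, k ≠ 0 → 2 * |k| ≤ (M : ℤ) →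
        fCoeff (fun x => ((FzM φ ζ M x : ℝ) : ℂ)) k = 0 := by
  intro ζ hz M hM
  have hφc : Continuous φ := hφ.continuous
  have hPMmem : ∀ p ∈ PM M, p.Prime ∧ M < 2 * p ∧ p ≤ M := by
    intro p hp
    simp only [PM, Finset.mem_filter, Finset.mem_range] at hp
    exact ⟨hp.2.1, hp.2.2, by omega⟩
  have hne : (PM M).Nonempty := by
    obtain ⟨p, hp, h1, h2⟩ := Nat.exists_prime_lt_and_le_two_mul (M / 2) (by omega)
    refine ⟨p, ?_⟩
    simp only [PM, Finset.mem_filter, Finset.mem_range]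
    exact ⟨by omega, hp, by omega⟩
  have hcard : (((PM M).card : ℕ) : ℂ) ≠ 0 :=
    Nat.cast_ne_zero.mpr (Finset.card_ne_zero.mpr hne)
  -- linearity
  have lin : ∀ k : ℤ, fCoeff (fun x => ((FzM φ ζ M x : ℝ) : ℂ)) k
      = (((PM M).card : ℕ) : ℂ)⁻¹
        * ∑ p ∈ PM M, fCoeff (fun x => ((Phip φ ζ p x : ℝ) : ℂ)) k := by
    intro k
    unfold fCoeff
    have hptw : Set.EqOn
        (fun x : ℝ => ((FzM φ ζ M x : ℝ) : ℂ)
          * Complex.exp (-(2 * (Real.pi : ℂ) * Complex.I * (k : ℂ) * (x : ℂ))))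
        (fun x : ℝ => (((PM M).card : ℕ) : ℂ)⁻¹
          * ∑ p ∈ PM M, (((Phip φ ζ p x : ℝ) : ℂ)
            * Complex.exp (-(2 * (Real.pi : ℂ) * Complex.I * (k : ℂ) * (x : ℂ)))))
        (Set.uIcc 0 1) := by
      intro x _
      simp only [FzM]
      push_cast
      rw [mul_assoc, Finset.sum_mul]
    rw [intervalIntegral.integral_congr hptw, intervalIntegral.integral_const_mul,
      intervalIntegral.integral_finset_sum]
    intro p hp
    have hppos : 0 < p := (hPMmem p hp).1.pos
    apply Continuous.intervalIntegrable
    exact (continuous_Phip hφc hsupp hz p hppos).mul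
      (Complex.continuous_exp.comp (by fun_prop))
  constructor
  · -- k = 0
    rw [lin 0]
    have hone : ∀ p ∈ PM M, fCoeff (fun x => ((Phip φ ζ p x : ℝ) : ℂ)) 0 = 1 := by
      intro p hp
      have hppos : 0 < p := (hPMmem p hp).1.pos
      have hp0' : (p : ℂ) ≠ 0 := Nat.cast_ne_zero.mpr hppos.ne'
      rw [fCoeff_Phip hφc hsupp hz p hppos 0]
      have hC : (∫ y : ℝ, ((scaled φ ζ y : ℝ) : ℂ)
          * Complex.exp (-(2 * (Real.pi : ℂ) * Complex.I * ((0 : ℤ) : ℂ) * (y : ℂ) / (p : ℂ)))) = 1 := by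
        have : ∀ y : ℝ, ((scaled φ ζ y : ℝ) : ℂ)
            * Complex.exp (-(2 * (Real.pi : ℂ) * Complex.I * ((0 : ℤ) : ℂ) * (y : ℂ) / (p : ℂ)))
            = ((scaled φ ζ y : ℝ) : ℂ) := by
          intro y; simp
        simp_rw [this]
        rw [show (∫ y : ℝ, ((scaled φ ζ y : ℝ) : ℂ)) = ((∫ y : ℝ, scaled φ ζ y : ℝ) : ℂ)
          from integral_ofReal, integral_scaled hz hint]
        norm_num
      rw [hC]
      have hω1 : ∀ r ∈ Finset.range p,
          Complex.exp (-(2 * (Real.pi : ℂ) * Complex.I * ((0 : ℤ) : ℂ) / (p : ℂ))) ^ r = 1 := by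
        intro r _; simp
      rw [Finset.sum_congr rfl hω1, Finset.sum_const, Finset.card_range]
      simp [hp0']
    rw [Finset.sum_congr rfl hone, Finset.sum_const, nsmul_eq_mul, mul_one]
    exact inv_mul_cancel₀ hcard
  · -- k ≠ 0
    intro k hk0 hk2
    rw [lin k]
    have hzero : ∀ p ∈ PM M, fCoeff (fun x => ((Phip φ ζ p x : ℝ) : ℂ)) k = 0 := by
      intro p hp
      obtain ⟨hprime, hM2p, hpM⟩ := hPMmem p hp
      have hppos : 0 < p := hprime.pos
      have hp0' : (p : ℂ) ≠ 0 := Nat.cast_ne_zero.mpr hppos.ne'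
      have hkltp : |k| < (p : ℤ) := by omega
      rw [fCoeff_Phip hφc hsupp hz p hppos k]
      set ω : ℂ := Complex.exp (-(2 * (Real.pi : ℂ) * Complex.I * (k : ℂ) / (p : ℂ))) with hωdef
      have hωp : ω ^ p = 1 := by
        rw [hωdef, ← Complex.exp_nat_mul]
        have : (p : ℂ) * (-(2 * (Real.pi : ℂ) * Complex.I * (k : ℂ) / (p : ℂ)))
            = ((-k : ℤ) : ℂ) * (2 * (Real.pi : ℂ) * Complex.I) := by
          push_cast
          field_simp
        rw [this, Complex.exp_int_mul_two_pi_mul_I]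
      have hωne : ω ≠ 1 := by
        intro hω
        rw [hωdef, Complex.exp_eq_one_iff] at hω
        obtain ⟨n, hn⟩ := hω
        have h2 : (2 * (Real.pi : ℂ) * Complex.I) * (-(k : ℂ))
            = (2 * (Real.pi : ℂ) * Complex.I) * ((n : ℂ) * (p : ℂ)) := by
          field_simp at hn
          linear_combination (2 * (Real.pi : ℂ) * Complex.I) * hn
        have h3 : (-(k : ℂ)) = (n : ℂ) * (p : ℂ) :=
          mul_left_cancel₀ Complex.two_pi_I_ne_zero h2
        have h4 : (-k : ℤ) = n * (p : ℤ) := by exact_mod_cast h3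
        have hdvd : (p : ℤ) ∣ |k| := by
          refine (dvd_abs _ _).mpr ?_
          exact ⟨-n, by linear_combination -h4⟩
        have := Int.le_of_dvd (abs_pos.mpr hk0) hdvd
        omega
      have hsum : (∑ r ∈ Finset.range p, ω ^ r) = 0 := by
        rw [geom_sum_eq hωne, hωp]
        simp
      rw [hsum]
      ring
    rw [Finset.sum_congr rfl hzero, Finset.sum_const_zero, mul_zero]
end

section
/- Let d ≥ 1 and let K ⊆ ℝ^d be compact. In the product space 𝒦*(K) × [0,d], where 𝒦*(K) carries the Hausdorff metric topology: (i) the set {(A,p) : dim_H(A) > p} is Fσ; and (ii) the set {(A,p) : dim_H(A) ≥ p} is a countable intersection of Fσ sets. -/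
open MeasureTheory TopologicalSpace

/-- A set is Fσ if it is a countable union of closed sets. -/
def IsFsigma {X : Type*} [TopologicalSpace X] (s : Set X) : Prop :=
  ∃ C : ℕ → Set X, (∀ n, IsClosed (C n)) ∧ s = ⋃ n, C n

open Set EMetric ENNReal NNReal Metric

lemma IsFsigma.union {X : Type*} [TopologicalSpace X] {s t : Set X}
    (hs : IsFsigma s) (ht : IsFsigma t) : IsFsigma (s ∪ t) := by
  obtain ⟨C, hC, rfl⟩ := hs
  obtain ⟨D, hD, rfl⟩ := ht
  exact ⟨fun n => C n ∪ D n, fun n => (hC n).union (hD n),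
    by rw [Set.iUnion_union_distrib]⟩

/-- The `q`-dimensional Hausdorff content of a set. -/
noncomputable def hCont {X : Type*} [EMetricSpace X] (q : ℝ) (s : Set X) : ℝ≥0∞ :=
  ⨅ (t : ℕ → Set X) (_ : s ⊆ ⋃ n, t n), ∑' n, EMetric.diam (t n) ^ q

lemma hCont_le {X : Type*} [EMetricSpace X] {q : ℝ} {s : Set X} {t : ℕ → Set X}
    (h : s ⊆ ⋃ n, t n) : hCont q s ≤ ∑' n, EMetric.diam (t n) ^ q :=
  iInf₂_le t h

lemma hCont_le_hausdorffMeasure {X : Type*} [EMetricSpace X] [MeasurableSpace X] [BorelSpace X]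
    {q : ℝ} (hq : 0 < q) (s : Set X) : hCont q s ≤ μH[q] s := by
  rw [MeasureTheory.Measure.hausdorffMeasure_apply]
  refine le_iSup₂_of_le 1 one_pos ?_
  refine le_iInf fun t => le_iInf fun hcov => le_iInf fun _ => ?_
  refine (hCont_le hcov).trans (ENNReal.tsum_le_tsum fun n => ?_)
  rcases (t n).eq_empty_or_nonempty with h | h
  · simp [h, ENNReal.zero_rpow_of_pos hq, EMetric.diam]
  · simp [h, EMetric.diam]

lemma hausdorffMeasure_eq_zero_of_hCont {X : Type*} [EMetricSpace X] [MeasurableSpace X]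
    [BorelSpace X] {q : ℝ} (hq : 0 < q) {s : Set X} (h : hCont q s = 0) : μH[q] s = 0 := by
  rw [MeasureTheory.Measure.hausdorffMeasure_apply]
  refine le_antisymm (iSup₂_le fun r hr => ?_) zero_le
  refine le_of_forall_gt fun b hb => ?_
  have hb0 : 0 < b := hb
  have hrq : 0 < r ^ q := by
    rw [pos_iff_ne_zero]
    intro h0
    rw [ENNReal.rpow_eq_zero_iff] at h0
    rcases h0 with ⟨h1, _⟩ | ⟨_, h2⟩
    · exact hr.ne' h1
    · exact absurd h2 (not_lt.2 hq.le)
  have hmin : 0 < min b (r ^ q) := lt_min hb0 hrq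
  have hlt : hCont q s < min b (r ^ q) := h ▸ hmin
  rw [hCont, iInf_lt_iff] at hlt
  obtain ⟨t, hlt⟩ := hlt
  rw [iInf_lt_iff] at hlt
  obtain ⟨hcov, hsum⟩ := hlt
  have hdiam : ∀ n, EMetric.diam (t n) ≤ r := by
    intro n
    by_contra hn
    push_neg at hn
    have : r ^ q < EMetric.diam (t n) ^ q := (ENNReal.rpow_lt_rpow_iff hq).2 hn
    have h2 : EMetric.diam (t n) ^ q ≤ ∑' m, EMetric.diam (t m) ^ q := ENNReal.le_tsum n
    exact absurd ((this.trans_le h2).trans hsum) (by simp [min_le_right])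
  calc (⨅ (t : ℕ → Set X) (_ : s ⊆ ⋃ n, t n) (_ : ∀ n, EMetric.diam (t n) ≤ r),
          ∑' n, ⨆ _ : (t n).Nonempty, EMetric.diam (t n) ^ q)
      ≤ ∑' n, ⨆ _ : (t n).Nonempty, EMetric.diam (t n) ^ q :=
        iInf_le_of_le t (iInf_le_of_le hcov (iInf_le _ hdiam))
    _ ≤ ∑' n, EMetric.diam (t n) ^ q := ENNReal.tsum_le_tsum fun n => iSup_le fun _ => le_rfl
    _ < min b (r ^ q) := hsum
    _ ≤ b := min_le_left _ _

/-- Superlevel sets of the Hausdorff content are closed in the Hausdorff metric. -/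
lemma isClosed_le_hCont {X : Type*} [MetricSpace X] {q : ℝ} (hq : 0 < q) {c : ℝ≥0∞}
    (hc : c ≠ ⊤) : IsClosed {A : NonemptyCompacts X | c ≤ hCont q (A : Set X)} := by
  rw [← isOpen_compl_iff, EMetric.isOpen_iff]
  intro A hA
  simp only [Set.mem_compl_iff, Set.mem_setOf_eq, not_le] at hA
  rw [hCont, iInf_lt_iff] at hA
  obtain ⟨t, hA⟩ := hA
  rw [iInf_lt_iff] at hA
  obtain ⟨hcov, hsum⟩ := hA
  set S := ∑' n, EMetric.diam (t n) ^ q with hS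
  obtain ⟨m, hm1, hm2⟩ := exists_between hsum
  have hSne : S ≠ ⊤ := (hsum.trans hc.lt_top).ne
  have hd0 : m - S ≠ 0 := fun h => absurd (tsub_eq_zero_iff_le.1 h) (not_le.2 hm1)
  set w : ℕ → ℝ≥0∞ := fun n => (m - S) * 2⁻¹ ^ (n + 1) with hw
  have hw0 : ∀ n, w n ≠ 0 := fun n =>
    mul_ne_zero hd0 (pow_ne_zero _ (by simp))
  have hwsum : ∑' n, w n = m - S := by
    rw [hw]
    rw [ENNReal.tsum_mul_left]
    have : ∑' n : ℕ, (2⁻¹ : ℝ≥0∞) ^ (n + 1) = 1 := by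
      have h1 : ∀ n : ℕ, (2⁻¹ : ℝ≥0∞) ^ (n + 1) = 2⁻¹ * 2⁻¹ ^ n := fun n => by
        rw [pow_succ, mul_comm]
      simp_rw [h1]
      rw [ENNReal.tsum_mul_left, ENNReal.tsum_geometric, ENNReal.one_sub_inv_two]
      exact ENNReal.mul_inv_cancel (by simp) (by simp)
    rw [this, mul_one]
  -- choose thickening radii
  have key : ∀ n, ∃ ε : ℝ≥0, 0 < ε ∧
      EMetric.diam (Metric.thickening (ε : ℝ) (t n)) ^ q ≤ EMetric.diam (t n) ^ q + w n := by
    intro n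
    have hDq : EMetric.diam (t n) ^ q ≠ ⊤ := by
      intro htop
      have h2 : EMetric.diam (t n) ^ q ≤ S := ENNReal.le_tsum n
      exact hSne (top_le_iff.1 (htop ▸ h2))
    have hcont : ContinuousAt (fun e : ℝ≥0 => (EMetric.diam (t n) + 2 * (e : ℝ≥0∞)) ^ q) 0 := by
      apply ENNReal.continuous_rpow_const.continuousAt.comp
      exact ((continuous_const.add ((ENNReal.continuous_const_mul (by simp)).comp
        ENNReal.continuous_coe)).continuousAt)
    have hval : (EMetric.diam (t n) + 2 * ((0 : ℝ≥0) : ℝ≥0∞)) ^ q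
        < EMetric.diam (t n) ^ q + w n := by
      simp only [ENNReal.coe_zero, mul_zero, add_zero]
      exact ENNReal.lt_add_right hDq (hw0 n)
    have hev := hcont.eventually (Filter.Tendsto.eventually_lt_const hval Filter.tendsto_id)
    have : ∀ᶠ ε : ℝ≥0 in nhdsWithin 0 (Set.Ioi 0), (EMetric.diam (t n) + 2 * (ε : ℝ≥0∞)) ^ q
        < EMetric.diam (t n) ^ q + w n := hev.filter_mono nhdsWithin_le_nhds
    obtain ⟨ε, hε1, hε2⟩ := (this.and eventually_mem_nhdsWithin).exists
    refine ⟨ε, hε2, ?_⟩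
    calc EMetric.diam (Metric.thickening (ε : ℝ) (t n)) ^ q
        ≤ (EMetric.diam (t n) + 2 * (ε : ℝ≥0∞)) ^ q :=
          ENNReal.rpow_le_rpow (Metric.ediam_thickening_le ε) hq.le
      _ ≤ EMetric.diam (t n) ^ q + w n := hε1.le
  choose ε hε0 hεle using key
  set V : ℕ → Set X := fun n => Metric.thickening (ε n) (t n) with hV
  have hVopen : IsOpen (⋃ n, V n) := isOpen_iUnion fun n => Metric.isOpen_thickening
  have hAsub : (A : Set X) ⊆ ⋃ n, V n :=
    hcov.trans (Set.iUnion_mono fun n =>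
      Metric.self_subset_thickening (by exact_mod_cast hε0 n) _)
  obtain ⟨r, hr0, hrsub⟩ := A.isCompact.exists_thickening_subset_open hVopen hAsub
  refine ⟨ENNReal.ofReal r, by simpa using hr0, ?_⟩
  intro B hB
  rw [EMetric.mem_ball] at hB
  simp only [Set.mem_compl_iff, Set.mem_setOf_eq, not_le]
  have hBsub : (B : Set X) ⊆ ⋃ n, V n := by
    refine Set.Subset.trans ?_ hrsub
    intro x hx
    rw [Metric.mem_thickening_iff_infEdist_lt]
    calc EMetric.infEdist x (A : Set X)
        ≤ EMetric.hausdorffEdist (B : Set X) (A : Set X) :=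
          EMetric.infEdist_le_hausdorffEdist_of_mem hx
      _ = edist B A := rfl
      _ < ENNReal.ofReal r := hB
  calc hCont q (B : Set X) ≤ ∑' n, EMetric.diam (V n) ^ q := hCont_le hBsub
    _ ≤ ∑' n, (EMetric.diam (t n) ^ q + w n) := ENNReal.tsum_le_tsum hεle
    _ = S + (m - S) := by rw [ENNReal.tsum_add, hwsum]
    _ = m := add_tsub_cancel_of_le hm1.le
    _ < c := hm2

/-- Characterization of `ofReal p < dimH s` via rational exponents and content bounds. -/
lemma ofReal_lt_dimH_iff {X : Type*} [MetricSpace X] [MeasurableSpace X] [BorelSpace X]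
    [SecondCountableTopology X] (p : ℝ) (s : Set X) :
    ENNReal.ofReal p < dimH s ↔ ∃ q : ℚ, ∃ k m : ℕ,
      0 < (q : ℝ) ∧ p ≤ (q : ℝ) - 1 / (k + 1) ∧
      1 / ((m : ℝ≥0∞) + 1) ≤ hCont (q : ℝ) s := by
  constructor
  · intro h
    obtain ⟨q, hq0, hpq, hqd⟩ := ENNReal.lt_iff_exists_rat_btwn.1 h
    have hco : ((Real.toNNReal (q : ℝ) : ℝ≥0) : ℝ≥0∞) = ENNReal.ofReal (q : ℝ) := rfl
    rw [hco] at hpq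
    have hq0' : 0 < (q : ℝ) := by
      by_contra hle
      push_neg at hle
      rw [ENNReal.ofReal_eq_zero.2 hle] at hpq
      exact (zero_le).not_gt hpq
    have hpq' : p < (q : ℝ) := by
      by_contra hle
      push_neg at hle
      exact absurd hpq (not_lt.2 (ENNReal.ofReal_le_ofReal hle))
    have hμ : μH[(q : ℝ)] s = ∞ := by
      have := hausdorffMeasure_of_lt_dimH (d := Real.toNNReal (q : ℝ)) hqd
      rwa [Real.coe_toNNReal _ hq0'.le] at this
    have hc0 : hCont (q : ℝ) s ≠ 0 := by
      intro h0
      rw [hausdorffMeasure_eq_zero_of_hCont hq0' h0] at hμ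
      exact ENNReal.zero_ne_top hμ
    obtain ⟨mm, hmm⟩ := ENNReal.exists_inv_nat_lt hc0
    obtain ⟨k, hk⟩ := exists_nat_one_div_lt (sub_pos.2 hpq')
    refine ⟨q, k, mm, hq0', by linarith, ?_⟩
    rw [one_div]
    refine le_trans ?_ hmm.le
    exact ENNReal.inv_le_inv.2 (by simp)
  · rintro ⟨q, k, mm, hq0, hpk, hm⟩
    have h1k : (0 : ℝ) < 1 / (k + 1) := by positivity
    have hp : p < (q : ℝ) := by linarith
    have hcne : hCont (q : ℝ) s ≠ 0 := by
      intro h0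
      rw [h0] at hm
      simp [ENNReal.div_eq_zero_iff] at hm
    have hμ : μH[(q : ℝ)] s ≠ 0 := fun h0 =>
      hcne (le_antisymm (le_trans (hCont_le_hausdorffMeasure hq0 s) h0.le) zero_le)
    have hdim : ((Real.toNNReal (q : ℝ) : ℝ≥0) : ℝ≥0∞) ≤ dimH s :=
      le_dimH_of_hausdorffMeasure_ne_zero (d := Real.toNNReal (q : ℝ))
        (by rwa [Real.coe_toNNReal _ hq0.le])
    calc ENNReal.ofReal p < ENNReal.ofReal (q : ℝ) :=
          (ENNReal.ofReal_lt_ofReal_iff hq0).2 hp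
      _ = ((Real.toNNReal (q : ℝ) : ℝ≥0) : ℝ≥0∞) := rfl
      _ ≤ dimH s := hdim

/-- For `K ⊆ ℝ^d` compact, in `𝒦*(K) × [0,d]` the set `{(A,p) : dim_H(A) > p}` is Fσ and the
set `{(A,p) : dim_H(A) ≥ p}` is a countable intersection of Fσ sets. -/
theorem stmt14 (d : ℕ) (hd : 1 ≤ d)
    (K : Set (EuclideanSpace ℝ (Fin d))) (hK : IsCompact K) :
    IsFsigma {x : NonemptyCompacts ↥K × ↥(Set.Icc (0 : ℝ) (d : ℝ)) |
        ENNReal.ofReal (x.2 : ℝ) < dimH (Subtype.val '' (x.1 : Set ↥K))} ∧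
    (∃ C : ℕ → Set (NonemptyCompacts ↥K × ↥(Set.Icc (0 : ℝ) (d : ℝ))),
      (∀ n, IsFsigma (C n)) ∧
      {x : NonemptyCompacts ↥K × ↥(Set.Icc (0 : ℝ) (d : ℝ)) |
        ENNReal.ofReal (x.2 : ℝ) ≤ dimH (Subtype.val '' (x.1 : Set ↥K))} = ⋂ n, C n) := by
  classical
  set Z := NonemptyCompacts ↥K × ↥(Set.Icc (0 : ℝ) (d : ℝ)) with hZ
  have hdimeq : ∀ A : NonemptyCompacts ↥K,
      dimH (Subtype.val '' (A : Set ↥K)) = dimH (A : Set ↥K) := fun A =>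
    (isometry_subtype_coe).dimH_image _
  -- the general Fσ lemma with a continuous threshold function
  have fsig : ∀ g : Z → ℝ, Continuous g →
      IsFsigma {x : Z | ENNReal.ofReal (g x) < dimH (Subtype.val '' (x.1 : Set ↥K))} := by
    intro g hg
    set F : ℚ × ℕ × ℕ → Set Z := fun t =>
      if 0 < (t.1 : ℝ) then
        {x : Z | g x ≤ (t.1 : ℝ) - 1 / (t.2.1 + 1)} ∩
        {x : Z | 1 / ((t.2.2 : ℝ≥0∞) + 1) ≤ hCont (t.1 : ℝ) (x.1 : Set ↥K)}
      else ∅ with hF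
    refine ⟨fun n => F (Denumerable.ofNat (ℚ × ℕ × ℕ) n), fun n => ?_, ?_⟩
    · rw [hF]
      dsimp only
      split_ifs with hpos
      · refine (isClosed_le hg continuous_const).inter ?_
        exact (isClosed_le_hCont hpos (by simp [ENNReal.div_eq_top])).preimage continuous_fst
      · exact isClosed_empty
    · ext x
      simp only [Set.mem_setOf_eq, Set.mem_iUnion]
      rw [hdimeq x.1]
      rw [ofReal_lt_dimH_iff (g x) (x.1 : Set ↥K)]
      constructor
      · rintro ⟨q, k, m, h1, h2, h3⟩
        obtain ⟨n, hn⟩ : ∃ n, Denumerable.ofNat (ℚ × ℕ × ℕ) n = (q, k, m) :=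
          ⟨_, Denumerable.ofNat_encode _⟩
        refine ⟨n, ?_⟩
        rw [hn, hF]
        simp only [if_pos h1]
        exact ⟨h2, h3⟩
      · rintro ⟨n, hn⟩
        rw [hF] at hn
        dsimp only at hn
        split_ifs at hn with hpos
        · exact ⟨_, _, _, hpos, hn.1, hn.2⟩
        · exact absurd hn (Set.notMem_empty x)
  constructor
  · exact fsig (fun x => (x.2 : ℝ)) (continuous_subtype_val.comp continuous_snd)
  · refine ⟨fun n => {x : Z | ENNReal.ofReal ((x.2 : ℝ) - 1 / (n + 1)) <
        dimH (Subtype.val '' (x.1 : Set ↥K))} ∪ {x : Z | (x.2 : ℝ) < 1 / (n + 1)}, ?_, ?_⟩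
    · intro n
      refine IsFsigma.union ?_ ?_
      · exact fsig (fun x => (x.2 : ℝ) - 1 / (n + 1))
          ((continuous_subtype_val.comp continuous_snd).sub continuous_const)
      · -- an open sublevel set of a continuous function is Fσ
        refine ⟨fun j => {x : Z | (x.2 : ℝ) ≤ 1 / (n + 1) - 1 / (j + 1)}, fun j =>
          isClosed_le (continuous_subtype_val.comp continuous_snd) continuous_const, ?_⟩
        ext x
        simp only [Set.mem_setOf_eq, Set.mem_iUnion]
        constructor
        · intro h
          obtain ⟨j, hj⟩ := exists_nat_one_div_lt (sub_pos.2 (show (x.2 : ℝ) < 1 / (n + 1) from h))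
          exact ⟨j, show (x.2 : ℝ) ≤ 1 / (n + 1) - 1 / (j + 1) by linarith⟩
        · rintro ⟨j, hj⟩
          have : (0 : ℝ) < 1 / (j + 1) := by positivity
          have hj' : (x.2 : ℝ) ≤ 1 / (n + 1) - 1 / (j + 1) := hj
          show (x.2 : ℝ) < 1 / (n + 1)
          linarith
    · ext x
      simp only [Set.mem_setOf_eq, Set.mem_iInter, Set.mem_union]
      constructor
      · intro h n
        by_cases hc : (x.2 : ℝ) < 1 / (n + 1)
        · exact Or.inr hc
        · push_neg at hc
          left
          have h1n : (0 : ℝ) < 1 / (n + 1) := by positivity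
          have hp0 : 0 < (x.2 : ℝ) := lt_of_lt_of_le h1n hc
          refine lt_of_lt_of_le ?_ h
          exact (ENNReal.ofReal_lt_ofReal_iff hp0).2 (by linarith)
      · intro h
        refine le_of_forall_lt fun t ht => ?_
        have htne : t ≠ ⊤ := (ht.trans ENNReal.ofReal_lt_top).ne
        have htr : t.toReal < (x.2 : ℝ) :=
          (ENNReal.lt_ofReal_iff_toReal_lt htne).1 ht
        have htnn : (0 : ℝ) ≤ t.toReal := ENNReal.toReal_nonneg
        obtain ⟨n, hn⟩ := exists_nat_one_div_lt (show 0 < (x.2 : ℝ) - t.toReal by linarith)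
        have h1n : (0 : ℝ) < 1 / (n + 1) := by positivity
        have hx2 : ¬ ((x.2 : ℝ) < 1 / (n + 1)) := by push_neg; linarith
        have hD := (h n).resolve_right hx2
        refine lt_trans ?_ hD
        exact (ENNReal.lt_ofReal_iff_toReal_lt htne).2 (by linarith)
end
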